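/- Let 0 ≤ β < 1, 0 < ε < 1, a > 0, Δ_IN > 0, Δ_OUT > 0 be real numbers, and define erf(x) = (2/√π)·∫_0^x exp(-t²) dt. Set Γ = 1 + ε(β - 1), ζ_IN,0 = Δ_IN + ε²(1-β)², ζ_OUT,0 = Δ_OUT + (1-ε)²(1-β)², m̂₀ = (1-ε)·erf(a/√(2ζ_IN,0)) + βε·erf(a/√(2ζ_OUT,0)), and Σ̂₀ = (1-ε)·erf(a/√(2ζ_IN,0)) + ε·erf(a/√(2ζ_OUT,0)). Then m̂₀ - Γ·Σ̂₀ = (1-β)(1-ε)ε·[erf(a/√(2ζ_IN,0)) - erf(a/√(2ζ_OUT,0))], and m̂₀/Γ - Σ̂₀ ≥ 0 if and only if Δ_OUT - Δ_IN ≥ (1-β)²(2ε - 1). -/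

import Mathlib

/-- The error function erf(x) = (2/√π)·∫₀ˣ exp(-t²) dt. -/
noncomputable def erf (x : ℝ) : ℝ :=
  (2 / Real.sqrt Real.pi) * ∫ t in (0 : ℝ)..x, Real.exp (-t ^ 2)

lemma erf_strictMono : StrictMono erf := by
  intro x y hxy
  unfold erf
  have hc : 0 < 2 / Real.sqrt Real.pi := by positivity
  have hint : ∀ u v : ℝ, IntervalIntegrable (fun t => Real.exp (-t ^ 2)) MeasureTheory.volume u v :=
    fun u v => (Continuous.intervalIntegrable (by continuity) u v)
  have hpos : 0 < ∫ t in x..y, Real.exp (-t ^ 2) := by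
    exact intervalIntegral.intervalIntegral_pos_of_pos (hint x y) (fun t => by positivity) hxy
  have hsplit : (∫ t in (0:ℝ)..x, Real.exp (-t ^ 2)) + ∫ t in x..y, Real.exp (-t ^ 2)
      = ∫ t in (0:ℝ)..y, Real.exp (-t ^ 2) :=
    intervalIntegral.integral_add_adjacent_intervals (hint 0 x) (hint x y)
  nlinarith [hpos, hsplit]

/-- Consistency condition for the generalisation error of Huber-loss ERM on the
double-Gaussian outlier model: m̂₀ - Γ Σ̂₀ factorises, and the required
regularisation coefficient λ₁ = m̂₀/Γ - Σ̂₀ is nonnegative iff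
Δ_OUT - Δ_IN ≥ (1-β)²(2ε-1). -/
theorem huber_generalisation_consistency_condition
    (β ε a ΔIN ΔOUT : ℝ)
    (hβ0 : 0 ≤ β) (hβ1 : β < 1) (hε0 : 0 < ε) (hε1 : ε < 1)
    (ha : 0 < a) (hIN : 0 < ΔIN) (hOUT : 0 < ΔOUT)
    (Γ ζIN ζOUT mh0 Sh0 : ℝ)
    (hΓ : Γ = 1 + ε * (β - 1))
    (hζIN : ζIN = ΔIN + ε ^ 2 * (1 - β) ^ 2)
    (hζOUT : ζOUT = ΔOUT + (1 - ε) ^ 2 * (1 - β) ^ 2)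
    (hmh0 : mh0 = (1 - ε) * erf (a / Real.sqrt (2 * ζIN))
        + β * ε * erf (a / Real.sqrt (2 * ζOUT)))
    (hSh0 : Sh0 = (1 - ε) * erf (a / Real.sqrt (2 * ζIN))
        + ε * erf (a / Real.sqrt (2 * ζOUT))) :
    mh0 - Γ * Sh0 = (1 - β) * (1 - ε) * ε *
        (erf (a / Real.sqrt (2 * ζIN)) - erf (a / Real.sqrt (2 * ζOUT))) ∧
    (0 ≤ mh0 / Γ - Sh0 ↔ (1 - β) ^ 2 * (2 * ε - 1) ≤ ΔOUT - ΔIN) := by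
  have hζINpos : 0 < ζIN := by rw [hζIN]; positivity
  have hζOUTpos : 0 < ζOUT := by rw [hζOUT]; positivity
  have hΓpos : 0 < Γ := by rw [hΓ]; nlinarith
  have hfact : mh0 - Γ * Sh0 = (1 - β) * (1 - ε) * ε *
      (erf (a / Real.sqrt (2 * ζIN)) - erf (a / Real.sqrt (2 * ζOUT))) := by
    rw [hmh0, hSh0, hΓ]; ring
  refine ⟨hfact, ?_⟩
  have hsIN : 0 < Real.sqrt (2 * ζIN) := Real.sqrt_pos.mpr (by linarith)
  have hsOUT : 0 < Real.sqrt (2 * ζOUT) := Real.sqrt_pos.mpr (by linarith)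
  have key : erf (a / Real.sqrt (2 * ζOUT)) ≤ erf (a / Real.sqrt (2 * ζIN))
      ↔ (1 - β) ^ 2 * (2 * ε - 1) ≤ ΔOUT - ΔIN := by
    rw [erf_strictMono.le_iff_le, div_le_div_iff_of_pos_left ha hsOUT hsIN,
        Real.sqrt_le_sqrt_iff (by linarith)]
    constructor
    · intro h; nlinarith [h]
    · intro h; nlinarith [h]
  have hc : 0 < (1 - β) * (1 - ε) * ε := by
    have h1 : 0 < 1 - β := by linarith
    have h2 : 0 < 1 - ε := by linarith
    positivity
  rw [sub_nonneg, le_div_iff₀ hΓpos, ← sub_nonneg, show mh0 - Sh0 * Γ = mh0 - Γ * Sh0 by ring,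
    hfact, mul_nonneg_iff_of_pos_left hc, sub_nonneg]
  exact key
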